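/- arXiv:1608.02682 — 2 statements merged into one kernel-verified Lean document; each statement's English description precedes it below -/
import Mathlib

section
/- (Consistency of the A-star heuristic.) Define h(U) = Σ over x ∉ U of d(x, univ \ {x}). Then for every finite set U of variables and every x ∉ U, the heuristic is consistent along the lattice edge from U to U ∪ {x}: h(U) ≤ d(x, U) + h(U ∪ {x}). -/
/-- `d s x U` : the score of selecting optimal parents of `x` from `U`,
defined as the minimum of `s x W` over all subsets `W ⊆ U`. -/
noncomputable def d {X : Type*} [DecidableEq X] (s : X → Finset X → ℝ)
    (x : X) (U : Finset X) : ℝ :=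
  U.powerset.inf' (Finset.powerset_nonempty U) (s x)

lemma d_anti {X : Type*} [DecidableEq X] (s : X → Finset X → ℝ)
    (x : X) {U V : Finset X} (h : U ⊆ V) : d s x V ≤ d s x U := by
  apply Finset.le_inf'
  intro W hW
  exact Finset.inf'_le _ (Finset.mem_powerset.2 ((Finset.mem_powerset.1 hW).trans h))

/-- Consistency of the A-star heuristic `h(U) = Σ_{x ∉ U} d(x, univ \ {x})`
along the lattice edge from `U` to `U ∪ {x}`:
`h(U) ≤ d(x, U) + h(U ∪ {x})`. -/
theorem astar_heuristic_consistent
    {X : Type*} [Fintype X] [DecidableEq X] [Nonempty X]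
    (s : X → Finset X → ℝ) (U : Finset X) (x : X) (hx : x ∉ U) :
    (∑ y ∈ Finset.univ \ U, d s y (Finset.univ \ {y})) ≤
      d s x U + ∑ y ∈ Finset.univ \ insert x U, d s y (Finset.univ \ {y}) := by
  have hset : Finset.univ \ U = insert x (Finset.univ \ insert x U) := by
    ext y
    simp only [Finset.mem_sdiff, Finset.mem_insert, Finset.mem_univ, true_and]
    by_cases hy : y = x <;> simp [hy, hx]
  have hxnot : x ∉ Finset.univ \ insert x U := by simp
  rw [hset, Finset.sum_insert hxnot]
  have h1 : d s x (Finset.univ \ {x}) ≤ d s x U :=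
    d_anti s x (fun y hy => Finset.mem_sdiff.2 ⟨Finset.mem_univ y,
      by simp [Finset.mem_singleton]; rintro rfl; exact hx hy⟩)
  linarith
end

section
/- (Iterated optimal path extension, correctness of Algorithm 2.) Let P be a duplicate-free list of variables with element set U, and let x and y be distinct variables not in U such that both U is a superset of an optimal parents set of x (d(x, U) = d(x, univ \ {x})) and U is a superset of an optimal parents set of y (d(y, U) = d(y, univ \ {y})). Then the minimum of Q(L) over all duplicate-free enumerations L of all variables having prefix P equals the minimum of Q(L) over all duplicate-free enumerations having prefix P ++ [x] ++ [y]; in particular the path extension step may be applied repeatedly, extending U by x and then by y, without losing any optimal solution. -/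
/-- `Qfrom s M U` : the cost of extending the lattice node `U` along the
ordering `M`, i.e. `Σ_k d(M_k, U ∪ S_k)` where `S_k` is the set of entries
of `M` preceding position `k`. -/
noncomputable def Qfrom {X : Type*} [DecidableEq X] (s : X → Finset X → ℝ) :
    List X → Finset X → ℝ
  | [], _ => 0
  | x :: M, U => d s x U + Qfrom s M (insert x U)

/-- `Q s L` : the cost of the ordering `L`, i.e. `Σ_k d(L_k, S_k)` where
`S_k` is the set of entries of `L` preceding position `k`; this is the score
of the network in which each variable's parents are chosen optimally from
its predecessors in `L`. -/
noncomputable def Q {X : Type*} [DecidableEq X] (s : X → Finset X → ℝ)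
    (L : List X) : ℝ :=
  Qfrom s L ∅


section Aux
variable {X : Type*} [DecidableEq X]

lemma d_mono (s : X → Finset X → ℝ) (z : X) {U V : Finset X} (h : U ⊆ V) :
    d s z V ≤ d s z U := by
  apply Finset.le_inf'
  intro W hW
  exact Finset.inf'_le _ (Finset.mem_powerset.2 ((Finset.mem_powerset.1 hW).trans h))

lemma Qfrom_append (s : X → Finset X → ℝ) (A B : List X) (U : Finset X) :
    Qfrom s (A ++ B) U = Qfrom s A U + Qfrom s B (U ∪ A.toFinset) := by
  induction A generalizing U with
  | nil => simp [Qfrom]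
  | cons a A ih =>
      simp only [List.cons_append, Qfrom, List.toFinset_cons]
      rw [ih, Finset.insert_union]
      rw [Finset.union_insert]
      ring

lemma promote (s : X → Finset X → ℝ) (x : X) (T : Finset X)
    (hc : ∀ V : Finset X, T ⊆ V → x ∉ V → d s x V = d s x T) :
    ∀ (M : List X) (U : Finset X), M.Nodup → x ∈ M → T ⊆ U → x ∉ U →
      Qfrom s (x :: M.erase x) U ≤ Qfrom s M U := by
  intro M
  induction M with
  | nil => intro U _ hmem; simp at hmem
  | cons a M ih =>
      intro U hnd hmem hTU hxU
      by_cases hax : a = x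
      · subst hax
        rw [List.erase_cons_head]
      · have hxM : x ∈ M := by
          rcases List.mem_cons.1 hmem with h | h
          · exact absurd h.symm hax
          · exact h
        rw [List.erase_cons_tail (by simp [Ne.symm, hax] : ¬ (a == x))]
        have hxMa : x ∉ insert a U := by
          simp [hxU, Ne.symm hax]
        have hIH := ih (insert a U) hnd.of_cons hxM
          (hTU.trans (Finset.subset_insert a U)) hxMa
        simp only [Qfrom] at hIH ⊢
        have h1 : d s x (insert a U) = d s x U := by
          rw [hc _ (hTU.trans (Finset.subset_insert a U)) hxMa, hc U hTU hxU]
        have h2 : d s a (insert x U) ≤ d s a U :=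
          d_mono s a (Finset.subset_insert x U)
        have h3 : insert x (insert a U) = insert a (insert x U) :=
          Finset.insert_comm x a U
        rw [h3, h1] at hIH
        linarith

lemma Qfrom_lb {X : Type*} [Fintype X] [DecidableEq X] [Nonempty X]
    (s : X → Finset X → ℝ) (M : List X) (U : Finset X) :
    (M.length : ℝ) * (Finset.univ.inf' Finset.univ_nonempty
      (fun z => d s z Finset.univ)) ≤ Qfrom s M U := by
  induction M generalizing U with
  | nil => simp [Qfrom]
  | cons a M ih =>
      have h1 : Finset.univ.inf' Finset.univ_nonempty
          (fun z => d s z Finset.univ) ≤ d s a U := by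
        refine le_trans (Finset.inf'_le _ (Finset.mem_univ a)) ?_
        exact d_mono s a (Finset.subset_univ U)
      have h2 := ih (insert a U)
      simp only [Qfrom, List.length_cons]
      push_cast
      linarith

lemma exists_completion {X : Type*} [Fintype X] [DecidableEq X]
    (P' : List X) (h : P'.Nodup) :
    ∃ L : List X, L.Nodup ∧ (∀ z : X, z ∈ L) ∧ P' <+: L := by
  refine ⟨P' ++ (Finset.univ \ P'.toFinset).toList, ?_, ?_, ⟨_, rfl⟩⟩
  · refine List.Nodup.append h (Finset.nodup_toList _) ?_
    intro a ha hb
    have := Finset.mem_toList.1 hb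
    simp at this
    exact this ha
  · intro z
    by_cases hz : z ∈ P'.toFinset
    · exact List.mem_append.2 (Or.inl (List.mem_toFinset.1 hz))
    · exact List.mem_append.2 (Or.inr (Finset.mem_toList.2 (by simp [hz])))

end Aux

/-- Iterated optimal path extension (correctness of Algorithm 2): if the
prefix set `U = P.toFinset` is a superset of an optimal parents set of both
`x` and `y` (with `x ≠ y`, `x, y ∉ U`), then the minimum of `Q` over all
duplicate-free enumerations of all variables with prefix `P` equals the
minimum over those with prefix `P ++ [x] ++ [y]`. -/

theorem iterated_path_extension_correct
    {X : Type*} [Fintype X] [DecidableEq X] [Nonempty X]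
    (s : X → Finset X → ℝ) (P : List X) (x y : X)
    (hP : P.Nodup) (hxy : x ≠ y)
    (hx : x ∉ P.toFinset) (hy : y ∉ P.toFinset)
    (hoptx : d s x P.toFinset = d s x (Finset.univ \ {x}))
    (hopty : d s y P.toFinset = d s y (Finset.univ \ {y})) :
    sInf {r : ℝ | ∃ L : List X, L.Nodup ∧ (∀ z : X, z ∈ L) ∧
        P <+: L ∧ Q s L = r} =
    sInf {r : ℝ | ∃ L : List X, L.Nodup ∧ (∀ z : X, z ∈ L) ∧
        (P ++ [x] ++ [y]) <+: L ∧ Q s L = r} := by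
  classical
  set T := P.toFinset with hT
  -- constancy facts
  have hconst : ∀ w : X, w ∉ T → d s w T = d s w (Finset.univ \ {w}) →
      ∀ V : Finset X, T ⊆ V → w ∉ V → d s w V = d s w T := by
    intro w hwT hopt V hTV hwV
    have hVsub : V ⊆ Finset.univ \ {w} := by
      intro v hv
      simp only [Finset.mem_sdiff, Finset.mem_univ, Finset.mem_singleton, true_and]
      rintro rfl; exact hwV hv
    have h1 : d s w (Finset.univ \ {w}) ≤ d s w V := d_mono s w hVsub
    have h2 : d s w V ≤ d s w T := d_mono s w hTV
    linarith [hopt ▸ h1, h2, hopt.le]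
  have hcx := hconst x hx hoptx
  have hcy := hconst y hy hopty
  have hxP : x ∉ P := fun h => hx (List.mem_toFinset.2 h)
  have hyP : y ∉ P := fun h => hy (List.mem_toFinset.2 h)
  -- key improvement step
  have key : ∀ r ∈ {r : ℝ | ∃ L : List X, L.Nodup ∧ (∀ z : X, z ∈ L) ∧
        P <+: L ∧ Q s L = r},
      ∃ r' ∈ {r : ℝ | ∃ L : List X, L.Nodup ∧ (∀ z : X, z ∈ L) ∧
        (P ++ [x] ++ [y]) <+: L ∧ Q s L = r}, r' ≤ r := by
    rintro r ⟨L, hnd, hall, ⟨M, rfl⟩, rfl⟩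
    have hxM : x ∈ M := by
      rcases List.mem_append.1 (hall x) with h | h
      · exact absurd h hxP
      · exact h
    have hyM : y ∈ M := by
      rcases List.mem_append.1 (hall y) with h | h
      · exact absurd h hyP
      · exact h
    have hMnd : M.Nodup := (List.nodup_append.1 hnd).2.1
    have hdisj : ∀ a ∈ P, a ∉ M := by
      have := (List.nodup_append.1 hnd).2.2
      intro a ha hb; exact this a ha a hb rfl
    set M2 := (M.erase x).erase y with hM2
    have hyMx : y ∈ M.erase x := (List.mem_erase_of_ne hxy.symm).2 hyM
    have p1 : M.Perm (x :: M.erase x) := List.perm_cons_erase hxM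
    have p2 : (M.erase x).Perm (y :: M2) := List.perm_cons_erase hyMx
    have perm : M.Perm (x :: y :: M2) := p1.trans (p2.cons x)
    set L' := P ++ (x :: y :: M2) with hL'
    have permL : (P ++ M).Perm L' := perm.append_left P
    refine ⟨Q s L', ⟨L', permL.nodup_iff.1 hnd, fun z => permL.mem_iff.1 (hall z),
      ⟨M2, by simp [hL']⟩, rfl⟩, ?_⟩
    -- the inequality
    have hTsub : T ⊆ T := Finset.Subset.refl T
    have step1 := promote s x T hcx M T hMnd hxM hTsub hx
    have hynx : y ∉ insert x T := by
      simp [Finset.mem_insert, hxy.symm, hy]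
    have step2 := promote s y T hcy (M.erase x) (insert x T)
      (hMnd.erase x) hyMx (Finset.subset_insert x T) hynx
    have e1 : Q s (P ++ M) = Qfrom s P ∅ + Qfrom s M T := by
      rw [Q, Qfrom_append]; simp [hT]
    have e2 : Q s L' = Qfrom s P ∅ + Qfrom s (x :: y :: M2) T := by
      rw [Q, hL', Qfrom_append]; simp [hT]
    rw [e1, e2]
    simp only [Qfrom] at step1 step2 ⊢
    linarith
  -- bounded below
  have bdd : ∀ p : List X → Prop,
      BddBelow {r : ℝ | ∃ L : List X, L.Nodup ∧ (∀ z : X, z ∈ L) ∧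
        p L ∧ Q s L = r} := by
    intro p
    refine ⟨(Fintype.card X : ℝ) * (Finset.univ.inf' Finset.univ_nonempty
      (fun z => d s z Finset.univ)), ?_⟩
    rintro r ⟨L, hnd, hall, -, rfl⟩
    have hlen : L.length = Fintype.card X := by
      have h1 : L.toFinset = Finset.univ :=
        Finset.eq_univ_iff_forall.2 fun z => List.mem_toFinset.2 (hall z)
      have h2 := List.toFinset_card_of_nodup hnd
      rw [h1, Finset.card_univ] at h2
      omega
    have := Qfrom_lb s L (∅ : Finset X)
    rw [hlen] at this
    exact this
  have bdd1 := bdd (fun L => P <+: L)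
  have bdd2 := bdd (fun L => (P ++ [x] ++ [y]) <+: L)
  -- nonemptiness
  have hPxy : (P ++ [x] ++ [y]).Nodup := by
    simp [List.nodup_append, hP, hxy, hxP, hyP]
    intro a ha; exact ⟨fun h => hxP (h ▸ ha), fun h => hyP (h ▸ ha)⟩
  obtain ⟨L1, hL1nd, hL1all, hL1pre⟩ := exists_completion P hP
  obtain ⟨L2, hL2nd, hL2all, hL2pre⟩ := exists_completion (P ++ [x] ++ [y]) hPxy
  have ne1 : {r : ℝ | ∃ L : List X, L.Nodup ∧ (∀ z : X, z ∈ L) ∧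
      P <+: L ∧ Q s L = r}.Nonempty := ⟨Q s L1, L1, hL1nd, hL1all, hL1pre, rfl⟩
  have ne2 : {r : ℝ | ∃ L : List X, L.Nodup ∧ (∀ z : X, z ∈ L) ∧
      (P ++ [x] ++ [y]) <+: L ∧ Q s L = r}.Nonempty :=
    ⟨Q s L2, L2, hL2nd, hL2all, hL2pre, rfl⟩
  apply le_antisymm
  · apply csInf_le_csInf bdd1 ne2
    rintro r ⟨L, hnd, hall, hpre, rfl⟩
    exact ⟨L, hnd, hall, (List.prefix_append P ([x] ++ [y])).trans
      (by rwa [← List.append_assoc]), rfl⟩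
  · apply le_csInf ne1
    rintro r hr
    obtain ⟨r', hr', hle⟩ := key r hr
    exact (csInf_le bdd2 hr').trans hle
end
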